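/- arXiv:1312.0583 — 4 statements merged into one kernel-verified Lean document; each statement's English description precedes it below -/
import Mathlib

section
/- Define polynomials P_n by P_0 = 1, P_1 = x - 1, and P_n = (x-2) P_{n-1} - P_{n-2} for n ≥ 2. Then the coefficient array of (P_n) is the Riordan array (1/(1+x), x/(1+x)^2); that is, P_n(x) = Σ_k ([x^n] (1/(1+x)) (x/(1+x)^2)^k) x^k. -/
open PowerSeries

/-- The polynomials `P_0 = 1`, `P_1 = x - 1`, `P_n = (x-2)P_{n-1} - P_{n-2}` have
coefficient array equal to the Riordan array `(1/(1+x), x/(1+x)^2)`: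
the coefficient of `x^k` in `P_n` is `[x^n] (1/(1+x)) (x/(1+x)^2)^k`. -/
theorem coeff_array_P (P : ℕ → Polynomial ℚ)
    (h0 : P 0 = 1) (h1 : P 1 = Polynomial.X - 1)
    (hrec : ∀ n, P (n + 2) = (Polynomial.X - 2) * P (n + 1) - P n) :
    ∀ n k, (P n).coeff k = coeff (R := ℚ) n ((1 + X)⁻¹ * (X * ((1 + X)⁻¹) ^ 2) ^ k) := by
  set g : PowerSeries ℚ := (1 + X)⁻¹ with hg
  have hc : constantCoeff (1 + X : PowerSeries ℚ) = 1 := by simp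
  have hunit : (1 + X : PowerSeries ℚ) * g = 1 := by
    apply PowerSeries.mul_inv_cancel; rw [hc]; norm_num
  have hg0 : constantCoeff g = 1 := by rw [hg, constantCoeff_inv, hc]; norm_num
  set S : ℕ → PowerSeries ℚ := fun k => g * (X * g ^ 2) ^ k with hS
  have hkey : ∀ k, (1 + X) ^ 2 * S (k + 1) = X * S k := by
    intro k
    have : (1 + X) ^ 2 * S (k + 1) = ((1 + X) * g) ^ 2 * (X * (g * (X * g ^ 2) ^ k)) := by
      simp only [hS]; ring
    rw [this, hunit]; ring
  -- recurrence in n for k+1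
  have hrecA : ∀ n k, coeff (n + 2) (S (k + 1)) =
      coeff (n + 1) (S k) - 2 * coeff (n + 1) (S (k + 1)) - coeff n (S (k + 1)) := by
    intro n k
    have h1' : coeff (n + 2) ((1 + X) ^ 2 * S (k + 1)) = coeff (n + 2) (X * S k) := by
      rw [hkey]
    rw [coeff_succ_X_mul] at h1'
    have hexp : (1 + X) ^ 2 * S (k + 1) = S (k + 1) + (X * S (k + 1) + X * S (k + 1)) + X * (X * S (k + 1)) := by ring
    rw [hexp] at h1'
    simp only [map_add, coeff_succ_X_mul] at h1'
    linarith
  -- recurrence for k = 0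
  have hrec0 : ∀ n, coeff (n + 1) (S 0) = - coeff n (S 0) := by
    intro n
    have h1' : coeff (n + 1) ((1 + X) * g) = coeff (n + 1) (1 : PowerSeries ℚ) := by
      rw [hunit]
    have hexp : (1 + X : PowerSeries ℚ) * g = g + X * g := by ring
    rw [hexp] at h1'
    simp only [map_add, coeff_succ_X_mul, coeff_one, Nat.succ_ne_zero, if_false] at h1'
    have : S 0 = g := by simp [hS]
    rw [this]
    linarith
  -- coeff 0 values
  have hA0 : ∀ k, coeff 0 (S k) = if k = 0 then 1 else 0 := by
    intro k
    rw [coeff_zero_eq_constantCoeff]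
    simp only [hS, map_mul, map_pow, map_mul, constantCoeff_X, hg0]
    cases k with
    | zero => simp
    | succ k => simp
  -- coeff 1 values
  have hg1 : coeff 1 g = -1 := by
    have h1' : coeff 1 ((1 + X) * g) = coeff 1 (1 : PowerSeries ℚ) := by rw [hunit]
    have hexp : (1 + X : PowerSeries ℚ) * g = g + X * g := by ring
    rw [hexp, map_add, coeff_succ_X_mul 0 g, coeff_zero_eq_constantCoeff, hg0, coeff_one] at h1'
    simp at h1'
    linarith
  have hA1 : ∀ k, coeff 1 (S k) = if k = 0 then -1 else if k = 1 then 1 else 0 := by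
    intro k
    match k with
    | 0 =>
      have : S 0 = g := by simp [hS]
      rw [this, hg1]; simp
    | 1 =>
      have : S 1 = X * g ^ 3 := by simp only [hS]; ring
      rw [this, coeff_succ_X_mul 0, coeff_zero_eq_constantCoeff]
      simp [hg0]
    | (k + 2) =>
      have : S (k + 2) = X * (X * (g * g ^ 2 * g ^ 2 * (X * g ^ 2) ^ k)) := by
        simp only [hS]; ring
      rw [this, coeff_succ_X_mul 0, coeff_zero_eq_constantCoeff]
      simp
  -- main two-step induction
  have main : ∀ n, (∀ k, (P n).coeff k = coeff n (S k)) ∧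
      (∀ k, (P (n+1)).coeff k = coeff (n+1) (S k)) := by
    intro n
    induction n with
    | zero =>
      constructor
      · intro k; rw [h0, hA0, Polynomial.coeff_one]
      · intro k; rw [h1, hA1]
        match k with
        | 0 => simp
        | 1 => simp [Polynomial.coeff_one]
        | (k+2) => simp [Polynomial.coeff_X, Polynomial.coeff_one]
    | succ n ih =>
      refine ⟨ih.2, ?_⟩
      intro k
      rw [hrec n]
      have e : ((Polynomial.X - 2) * P (n + 1) - P n).coeff k =
          (Polynomial.X * P (n+1)).coeff k - 2 * (P (n+1)).coeff k - (P n).coeff k := by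
        simp [sub_mul, Polynomial.coeff_sub, Polynomial.coeff_ofNat_mul]
        try ring
      rw [e]
      match k with
      | 0 =>
        rw [Polynomial.mul_coeff_zero, hrec0 (n + 1), hrec0 n]
        simp only [Polynomial.coeff_X_zero, zero_mul]
        rw [ih.1 0, ih.2 0, hrec0 n]
        ring
      | (j + 1) =>
        rw [Polynomial.coeff_X_mul, ih.1 (j+1), ih.2 (j+1), ih.2 j, hrecA n j]
        try ring
  intro n k
  exact (main n).1 k
end

section
/- Define polynomials Q_n by Q_0 = 1, Q_1 = x - 2, and Q_n = (x-2) Q_{n-1} - Q_{n-2} for n ≥ 2. Then the coefficient array of (Q_n) is the Riordan array (1/(1+x)^2, x/(1+x)^2). -/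
open PowerSeries

noncomputable def Fq (k : ℕ) : PowerSeries ℚ :=
  ((1 + X)⁻¹) ^ 2 * (X * ((1 + X)⁻¹) ^ 2) ^ k

lemma hB : (1 + X : ℚ⟦X⟧) * (1 + X)⁻¹ = 1 :=
  PowerSeries.mul_inv_cancel _ (by simp)

lemma cB0 : constantCoeff (R := ℚ) ((1 + X : ℚ⟦X⟧)⁻¹) = 1 := by
  rw [constantCoeff_inv]; simp

lemma cB1 : coeff (R := ℚ) 1 ((1 + X : ℚ⟦X⟧)⁻¹) = -1 := by
  have h := congrArg (coeff (R := ℚ) 1) hB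
  rw [add_mul, one_mul, map_add, coeff_succ_X_mul,
    coeff_zero_eq_constantCoeff_apply, cB0] at h
  simp at h
  linarith

lemma key1 (k : ℕ) : (1 + X : ℚ⟦X⟧) ^ 2 * Fq (k + 1) = X * Fq k := by
  unfold Fq
  have : (1 + X : ℚ⟦X⟧) ^ 2 * (((1 + X)⁻¹) ^ 2 * (X * ((1 + X)⁻¹) ^ 2) ^ (k + 1))
      = ((1 + X) * (1 + X)⁻¹) ^ 2
        * (X * (((1 + X)⁻¹) ^ 2 * (X * ((1 + X)⁻¹) ^ 2) ^ k)) := by ring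
  rw [this, hB]; ring

lemma key0 : (1 + X : ℚ⟦X⟧) ^ 2 * Fq 0 = 1 := by
  unfold Fq
  have : (1 + X : ℚ⟦X⟧) ^ 2 * (((1 + X)⁻¹) ^ 2 * (X * ((1 + X)⁻¹) ^ 2) ^ 0)
      = ((1 + X) * (1 + X)⁻¹) ^ 2 := by ring
  rw [this, hB]; ring

lemma coeff_rel (n : ℕ) (f g : ℚ⟦X⟧) (h : (1 + X) ^ 2 * f = g) :
    coeff (R := ℚ) (n + 2) f = coeff (R := ℚ) (n + 2) g - 2 * coeff (R := ℚ) (n + 1) f - coeff (R := ℚ) n f := by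
  have hg : g = f + (X * f + (X * f + X * (X * f))) := by rw [← h]; ring
  have e2 : coeff (R := ℚ) (n + 2) (X * f) = coeff (R := ℚ) (n + 1) f := coeff_succ_X_mul (n + 1) f
  have e3 : coeff (R := ℚ) (n + 2) (X * (X * f)) = coeff (R := ℚ) n f :=
    (coeff_succ_X_mul (n + 1) (X * f)).trans (coeff_succ_X_mul n f)
  rw [hg, map_add, map_add, map_add, e2, e3]
  ring

lemma Fq0_coeff0 : coeff (R := ℚ) 0 (Fq 0) = 1 := by
  unfold Fq
  simp [coeff_zero_eq_constantCoeff_apply, cB0]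

lemma Fq0_coeff1 : coeff (R := ℚ) 1 (Fq 0) = -2 := by
  unfold Fq
  simp only [pow_zero, mul_one, pow_two, coeff_mul]
  rw [Finset.Nat.sum_antidiagonal_eq_sum_range_succ_mk]
  simp [coeff_zero_eq_constantCoeff_apply, cB0, cB1, Finset.sum_range_succ]
  norm_num

lemma Fq_succ (k : ℕ) : Fq (k + 1) = X * (((1 + X)⁻¹) ^ 4 * (X * ((1 + X)⁻¹) ^ 2) ^ k) := by
  unfold Fq; ring

lemma Fq_coeff0 (k : ℕ) : coeff (R := ℚ) 0 (Fq (k + 1)) = 0 := by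
  rw [Fq_succ]
  simp [coeff_zero_eq_constantCoeff_apply]

lemma Fq1_coeff1 : coeff (R := ℚ) 1 (Fq 1) = 1 := by
  rw [Fq_succ, coeff_succ_X_mul]
  simp [coeff_zero_eq_constantCoeff_apply, cB0]

lemma Fq2_coeff1 (k : ℕ) : coeff (R := ℚ) 1 (Fq (k + 2)) = 0 := by
  have : Fq (k + 2) = X * (X * (((1 + X)⁻¹) ^ 6 * (X * ((1 + X)⁻¹) ^ 2) ^ k)) := by
    unfold Fq; ring
  rw [this, coeff_succ_X_mul]
  simp [coeff_zero_eq_constantCoeff_apply]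

/-- The polynomials `Q_0 = 1`, `Q_1 = x - 2`, `Q_n = (x-2)Q_{n-1} - Q_{n-2}` have
coefficient array equal to the Riordan array `(1/(1+x)^2, x/(1+x)^2)`:
the coefficient of `x^k` in `Q_n` is `[x^n] (1/(1+x)^2) (x/(1+x)^2)^k`. -/
theorem coeff_array_Q (Q : ℕ → Polynomial ℚ)
    (h0 : Q 0 = 1) (h1 : Q 1 = Polynomial.X - 2)
    (hrec : ∀ n, Q (n + 2) = (Polynomial.X - 2) * Q (n + 1) - Q n) :
    ∀ n k, (Q n).coeff k
      = coeff (R := ℚ) n (((1 + X)⁻¹) ^ 2 * (X * ((1 + X)⁻¹) ^ 2) ^ k) := by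
  have expand : ∀ (p q : Polynomial ℚ) (k : ℕ),
      ((Polynomial.X - 2) * p - q).coeff k
        = (Polynomial.X * p).coeff k - 2 * p.coeff k - q.coeff k := by
    intro p q k
    simp [sub_mul, Polynomial.coeff_sub]
  have main : ∀ n k, (Q n).coeff k = coeff (R := ℚ) n (Fq k) := by
    intro n
    induction n using Nat.strong_induction_on with
    | _ n ih =>
      match n with
      | 0 =>
        intro k
        rw [h0]
        match k with
        | 0 => simpa using Fq0_coeff0.symm
        | k + 1 => simpa [Polynomial.coeff_one] using (Fq_coeff0 k).symm
      | 1 =>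
        intro k
        rw [h1]
        match k with
        | 0 => simpa using Fq0_coeff1.symm
        | 1 => simpa using Fq1_coeff1.symm
        | k + 2 => simpa [Polynomial.coeff_X] using (Fq2_coeff1 k).symm
      | n + 2 =>
        intro k
        have ih1 := ih (n + 1) (by omega)
        have ih0 := ih n (by omega)
        rw [hrec, expand]
        match k with
        | 0 =>
          have hr := coeff_rel n (Fq 0) 1 key0
          rw [ih1 0, ih0 0, hr]
          simp [coeff_one, Polynomial.mul_coeff_zero]
        | k + 1 =>
          have hr := coeff_rel n (Fq (k + 1)) (X * Fq k) (key1 k)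
          have hx : coeff (R := ℚ) (n + 2) (X * Fq k) = coeff (R := ℚ) (n + 1) (Fq k) :=
            coeff_succ_X_mul (n + 1) (Fq k)
          rw [Polynomial.coeff_X_mul, ih1 k, ih1 (k + 1), ih0 (k + 1), hr, hx]
  intro n k
  rw [main n k]
  rfl
end

section
/- Given a Riordan array A = (u, v) such that v/x has a square root r(x) as a formal power series with r(0) = 1, the Riordan array R = (u, x·r(x)) has the property that A(n,k) = R(n+k, 2k) for all n ≥ k ≥ 0; i.e., A embeds into R as the even-column array. -/
open PowerSeries

/-- If the Riordan array `A = (u, v)` is such that `v/x` has a square root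
`r` with `r 0 = 1` (i.e. `v = x r^2`), then `A` embeds into `R = (u, x r)` as the
even-column array: `A n k = R (n+k) (2k)` for all `n ≥ k ≥ 0`. -/
theorem embedding_of_square_root (u v r : PowerSeries ℤ)
    (hu : constantCoeff u = 1) (hr : constantCoeff r = 1)
    (hv : v = X * r ^ 2)
    (n k : ℕ) (hkn : k ≤ n) :
    coeff n (u * v ^ k) = coeff (n + k) (u * (X * r) ^ (2 * k)) := by
  subst hv
  have h1 : u * (X * r ^ 2) ^ k = X ^ k * (u * r ^ (2 * k)) := by ring
  have h2 : u * (X * r) ^ (2 * k) = X ^ (2 * k) * (u * r ^ (2 * k)) := by ring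
  rw [h1, h2]
  obtain ⟨m, rfl⟩ := Nat.exists_eq_add_of_le hkn
  have e1 : k + m = m + k := by ring
  have e2 : m + k + k = m + 2 * k := by ring
  rw [e1, e2, coeff_X_pow_mul, coeff_X_pow_mul]
end

section
/- Let P_n be defined by P_0 = 1, P_1 = x - 3, P_n = (x-7)P_{n-1} - 12 P_{n-2} for n ≥ 2. Then the coefficient array of (P_n) is the Riordan array (1/(1+3x), x/(1+7x+12x^2)). -/
open PowerSeries

noncomputable def g347 : ℚ⟦X⟧ := (1 + 3 * X)⁻¹
noncomputable def q347 : ℚ⟦X⟧ := (1 + 7 * X + 12 * X ^ 2)⁻¹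

lemma hg347 : (1 + 3 * X : ℚ⟦X⟧) * g347 = 1 :=
  PowerSeries.mul_inv_cancel _ (by simp)

lemma hq347 : (1 + 7 * X + 12 * X ^ 2 : ℚ⟦X⟧) * q347 = 1 :=
  PowerSeries.mul_inv_cancel _ (by simp)

lemma hgrec (m : ℕ) : coeff (R := ℚ) (m + 1) g347 = -3 * coeff (R := ℚ) m g347 := by
  have h := congrArg (coeff (R := ℚ) (m + 1)) hg347
  rw [coeff_one] at h
  simp only [add_mul, one_mul, map_add, Nat.succ_ne_zero, if_false] at h
  rw [show (3 : ℚ⟦X⟧) * X * g347 = X * (3 * g347) by ring, coeff_succ_X_mul] at h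
  have h3 : coeff (R := ℚ) m (3 * g347) = 3 * coeff (R := ℚ) m g347 := coeff_C_mul m g347 3
  rw [h3] at h
  linarith

lemma expand347 (h : ℚ⟦X⟧) (n : ℕ) :
    coeff (R := ℚ) (n + 2) ((1 + 7 * X + 12 * X ^ 2) * h)
      = coeff (R := ℚ) (n + 2) h + 7 * coeff (R := ℚ) (n + 1) h + 12 * coeff (R := ℚ) n h := by
  rw [show (1 + 7 * X + 12 * X ^ 2 : ℚ⟦X⟧) * h = h + X * (7 * h) + X * (X * (12 * h)) by ring,
    map_add, map_add, coeff_succ_X_mul, coeff_succ_X_mul, coeff_succ_X_mul]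
  have h7 : coeff (R := ℚ) (n + 1) (7 * h) = 7 * coeff (R := ℚ) (n + 1) h := coeff_C_mul (n + 1) h 7
  have h12 : coeff (R := ℚ) n (12 * h) = 12 * coeff (R := ℚ) n h := coeff_C_mul n h 12
  rw [h7, h12]

lemma coeffzero347 (k : ℕ) :
    coeff (R := ℚ) 0 (g347 * (X * q347) ^ k) = if k = 0 then 1 else 0 := by
  cases k with
  | zero => simp [g347, coeff_zero_eq_constantCoeff, constantCoeff_inv]
  | succ j =>
    rw [show g347 * (X * q347) ^ (j + 1) = X * (g347 * q347 * (X * q347) ^ j) by ring]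
    simp [coeff_zero_eq_constantCoeff]

lemma coeffone347 (k : ℕ) :
    coeff (R := ℚ) 1 (g347 * (X * q347) ^ k)
      = if k = 0 then -3 else if k = 1 then 1 else 0 := by
  match k with
  | 0 =>
    simpa [g347, coeff_zero_eq_constantCoeff, constantCoeff_inv] using hgrec 0
  | 1 =>
    rw [show g347 * (X * q347) ^ 1 = X * (g347 * q347) by ring, coeff_succ_X_mul]
    simp [g347, q347, coeff_zero_eq_constantCoeff, constantCoeff_inv]
  | (j + 2) =>
    rw [show g347 * (X * q347) ^ (j + 2)
        = X * (X * (g347 * q347 ^ 2 * (X * q347) ^ j)) by ring, coeff_succ_X_mul]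
    simp [coeff_zero_eq_constantCoeff]

lemma coeffrec347 (n k : ℕ) :
    coeff (R := ℚ) (n + 2) (g347 * (X * q347) ^ (k + 1))
      = coeff (R := ℚ) (n + 1) (g347 * (X * q347) ^ k)
        - 7 * coeff (R := ℚ) (n + 1) (g347 * (X * q347) ^ (k + 1))
        - 12 * coeff (R := ℚ) n (g347 * (X * q347) ^ (k + 1)) := by
  have key : (1 + 7 * X + 12 * X ^ 2 : ℚ⟦X⟧) * (g347 * (X * q347) ^ (k + 1))
      = X * (g347 * (X * q347) ^ k) := by
    have : (1 + 7 * X + 12 * X ^ 2 : ℚ⟦X⟧) * (g347 * (X * q347) ^ (k + 1))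
        = ((1 + 7 * X + 12 * X ^ 2) * q347) * (X * (g347 * (X * q347) ^ k)) := by ring
    rw [this, hq347, one_mul]
  have h := congrArg (coeff (R := ℚ) (n + 2)) key
  rw [expand347, coeff_succ_X_mul] at h
  linarith

lemma coeffrec347₀ (n : ℕ) :
    coeff (R := ℚ) (n + 2) (g347 * (X * q347) ^ 0)
      = -7 * coeff (R := ℚ) (n + 1) (g347 * (X * q347) ^ 0)
        - 12 * coeff (R := ℚ) n (g347 * (X * q347) ^ 0) := by
  simp only [pow_zero, mul_one]
  rw [hgrec (n + 1), hgrec n]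
  ring

/-- The polynomials `P_0 = 1`, `P_1 = x - 3`, `P_n = (x-7)P_{n-1} - 12 P_{n-2}` have
coefficient array equal to the Riordan array `(1/(1+3x), x/(1+7x+12x^2))`. -/
theorem coeff_array_P_347 (P : ℕ → Polynomial ℚ)
    (h0 : P 0 = 1) (h1 : P 1 = Polynomial.X - 3)
    (hrec : ∀ n, P (n + 2) = (Polynomial.X - 7) * P (n + 1) - 12 * P n) :
    ∀ n k, (P n).coeff k
      = coeff (R := ℚ) n ((1 + 3 * X)⁻¹ * (X * (1 + 7 * X + 12 * X ^ 2)⁻¹) ^ k) := by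
  have main : ∀ n k, (P n).coeff k = coeff (R := ℚ) n (g347 * (X * q347) ^ k) := by
    intro n
    induction n using Nat.strong_induction_on with
    | _ n ih =>
      match n with
      | 0 =>
        intro k
        rw [h0, coeffzero347, Polynomial.coeff_one]
      | 1 =>
        intro k
        rw [h1, coeffone347]
        rcases k with _ | _ | j <;> simp [Polynomial.coeff_X]
      | (m + 2) =>
        intro k
        have ih1 := ih (m + 1) (by omega)
        have ih0 := ih m (by omega)
        rw [hrec m]
        have hPexp : ((Polynomial.X - 7) * P (m + 1) - 12 * P m).coeff k
            = (Polynomial.X * P (m + 1)).coeff k - 7 * (P (m + 1)).coeff k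
              - 12 * (P m).coeff k := by
          rw [show (Polynomial.X - 7) * P (m + 1) - 12 * P m
            = Polynomial.X * P (m + 1) - Polynomial.C 7 * P (m + 1)
              - Polynomial.C 12 * P m by rw [show (7 : Polynomial ℚ) = Polynomial.C 7 from rfl,
              show (12 : Polynomial ℚ) = Polynomial.C 12 from rfl]; ring]
          simp [Polynomial.coeff_sub, Polynomial.coeff_C_mul]
        rw [hPexp]
        cases k with
        | zero =>
          rw [Polynomial.mul_coeff_zero, Polynomial.coeff_X_zero, zero_mul,
            ih1 0, ih0 0, coeffrec347₀]
          ring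
        | succ j =>
          rw [Polynomial.coeff_X_mul, ih1 j, ih1 (j + 1), ih0 (j + 1), coeffrec347]
  exact main
end
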